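/- The real subalgebra of Cl(3,3) generated by the six elements γ⁰ := β¹γ¹β²γ²β³γ³, γ¹, γ², γ³, i := β¹β², and C := β¹ equals all of Cl(3,3); in particular, the 'extended Dirac algebra' generated by {γ^μ, i, C} is isomorphic to Cl(3,3). -/

import Mathlib

noncomputable section
open CliffordAlgebra

/-- The quadratic form of signature (3,3) on ℝ⁶: the first three coordinates
(the `β` directions) have weight `+1`, the last three (the `γ` directions) weight `-1`. -/
def Q33 : QuadraticForm ℝ (Fin 6 → ℝ) :=
  QuadraticMap.weightedSumSquares ℝ (![1, 1, 1, -1, -1, -1] : Fin 6 → ℝ)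

/-- The real Clifford algebra Cl(3,3). -/
abbrev Cl33 := CliffordAlgebra Q33

/-- The generators β¹,β²,β³ (squaring to `+1`). -/
def β (k : Fin 3) : Cl33 := ι Q33 (Pi.single (Fin.castAdd 3 k) 1)

/-- The generators γ¹,γ²,γ³ (squaring to `-1`). -/
def γ (k : Fin 3) : Cl33 := ι Q33 (Pi.single (Fin.natAdd 3 k) 1)

/-- γ⁰ := β¹γ¹β²γ²β³γ³. -/
def γ0 : Cl33 := β 0 * γ 0 * β 1 * γ 1 * β 2 * γ 2

lemma Q33_single (i : Fin 6) : Q33 (Pi.single i 1) = ![1,1,1,-1,-1,-1] i := by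
  rw [Q33, QuadraticMap.weightedSumSquares_apply]
  rw [Finset.sum_eq_single i]
  · simp
  · intro b _ hb; simp [Pi.single_apply, hb]
  · simp

lemma β_sq (k : Fin 3) : β k * β k = 1 := by
  rw [β, ι_sq_scalar, Q33_single]
  fin_cases k <;> norm_num [show Fin.castAdd 3 (0:Fin 3) = (0:Fin 6) from rfl,
    show Fin.castAdd 3 (1:Fin 3) = (1:Fin 6) from rfl,
    show Fin.castAdd 3 (2:Fin 3) = (2:Fin 6) from rfl]

lemma γ_sq (k : Fin 3) : γ k * γ k = -1 := by
  rw [γ, ι_sq_scalar, Q33_single]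
  fin_cases k <;> norm_num [show Fin.addNat (0:Fin 3) 3 = (3:Fin 6) from rfl,
    show Fin.addNat (1:Fin 3) 3 = (4:Fin 6) from rfl,
    show Fin.addNat (2:Fin 3) 3 = (5:Fin 6) from rfl,
    show (![1, 1, 1, -1, -1, -1] : Fin 6 → ℝ) 3 = -1 from rfl,
    show (![1, 1, 1, -1, -1, -1] : Fin 6 → ℝ) 4 = -1 from rfl]

lemma β_mul_β (k : Fin 3) (x : Cl33) : β k * (β k * x) = x := by
  rw [← mul_assoc, β_sq, one_mul]

lemma γ_mul_γ (k : Fin 3) (x : Cl33) : γ k * (γ k * x) = -x := by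
  rw [← mul_assoc, γ_sq, neg_one_mul]

/-- the subalgebra generated by γ⁰, γ¹, γ², γ³, i := β¹β² and C := β¹
is all of Cl(3,3); in particular the "extended Dirac algebra" generated by
{γ^μ, i, C} is isomorphic to Cl(3,3). -/
theorem stmt6 :
    Algebra.adjoin ℝ ({γ0, γ 0, γ 1, γ 2, β 0 * β 1, β 0} : Set Cl33) = ⊤ := by
  set A := Algebra.adjoin ℝ ({γ0, γ 0, γ 1, γ 2, β 0 * β 1, β 0} : Set Cl33) with hA
  have hγ0 : γ0 ∈ A := Algebra.subset_adjoin (by simp)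
  have hg0 : γ 0 ∈ A := Algebra.subset_adjoin (by simp)
  have hg1 : γ 1 ∈ A := Algebra.subset_adjoin (by simp)
  have hg2 : γ 2 ∈ A := Algebra.subset_adjoin (by simp)
  have hi : β 0 * β 1 ∈ A := Algebra.subset_adjoin (by simp)
  have hb0 : β 0 ∈ A := Algebra.subset_adjoin (by simp)
  have hb1 : β 1 ∈ A := by
    have : β 1 = β 0 * (β 0 * β 1) := (β_mul_β 0 _).symm
    rw [this]; exact mul_mem hb0 hi
  have hb2 : β 2 ∈ A := by
    have h : β 2 = -(γ 1 * (β 1 * (γ 0 * (β 0 * (γ0 * γ 2))))) := by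
      simp [γ0, mul_assoc, β_mul_β, γ_mul_γ, γ_sq, mul_neg, neg_neg]
    rw [h]
    exact neg_mem (mul_mem hg1 (mul_mem hb1 (mul_mem hg0 (mul_mem hb0 (mul_mem hγ0 hg2)))))
  have hgen : ∀ i : Fin 6, ι Q33 (Pi.single i 1) ∈ A := by
    intro i
    fin_cases i
    · exact hb0
    · exact hb1
    · exact hb2
    · exact hg0
    · exact hg1
    · exact hg2
  rw [eq_top_iff]
  rintro x -
  induction x using CliffordAlgebra.induction with
  | algebraMap r => exact A.algebraMap_mem r
  | ι m =>
      have hm : m = ∑ i : Fin 6, m i • (Pi.single i 1 : Fin 6 → ℝ) := by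
        funext j
        simp [Pi.single_apply, Finset.sum_apply]
      rw [hm, map_sum]
      exact Subalgebra.sum_mem A fun i _ => by
        rw [map_smul]; exact Subalgebra.smul_mem A (hgen i) _
  | mul a b ha hb => exact mul_mem ha hb
  | add a b ha hb => exact add_mem ha hb
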